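/- Let p ≥ 0, r > 0, ξ, c, d ≥ 0, and let u(s) = P(s)(1 + c·cos(ξs) + d·sin(ξs))·e^{−rs} where P(s) = ∑_{k=0}^{p} a_k s^k is a real polynomial. Then there exist real (3p+3)×(3p+3) matrices A_u and B_u, with every complex eigenvalue of B_u having strictly positive real part, such that u(s) = ⟨A_u | exp(−s B_u)⟩ for all s ≥ 0. -/

import Mathlib

open Matrix Real

set_option linter.unusedSectionVars false
set_option maxHeartbeats 1000000

open Matrix

section KronAux

variable {R : Type*} [CommRing R] {m n ι : Type*} [Fintype m] [Fintype n] [Fintype ι]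
  [DecidableEq m] [DecidableEq n] [DecidableEq ι]

/-- Kronecker-type product transported along an equiv `q`. -/
def mkron (q : ι ≃ m × n) (P : Matrix m m R) (M : Matrix n n R) : Matrix ι ι R :=
  Matrix.of fun x y => P (q x).1 (q y).1 * M (q x).2 (q y).2

variable (q : ι ≃ m × n)

lemma mkron_apply (P : Matrix m m R) (M : Matrix n n R) (x y : ι) :
    mkron q P M x y = P (q x).1 (q y).1 * M (q x).2 (q y).2 := rfl

lemma mkron_mul (P P' : Matrix m m R) (M M' : Matrix n n R) :
    mkron q P M * mkron q P' M' = mkron q (P * P') (M * M') := by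
  ext x y
  rw [Matrix.mul_apply, mkron_apply, Matrix.mul_apply, Matrix.mul_apply,
    ← Equiv.sum_comp q.symm (fun z => mkron q P M x z * mkron q P' M' z y),
    Finset.sum_mul_sum]
  rw [Fintype.sum_prod_type]
  refine Finset.sum_congr rfl fun a _ => ?_
  refine Finset.sum_congr rfl fun b _ => ?_
  simp only [mkron_apply, Equiv.apply_symm_apply]
  ring

lemma mkron_one : mkron q (1 : Matrix m m R) (1 : Matrix n n R) = 1 := by
  ext x y
  by_cases h : x = y
  · subst h; simp [mkron_apply, Matrix.one_apply]
  · have : q x ≠ q y := fun hq => h (q.injective hq)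
    rw [Ne, Prod.ext_iff, not_and_or] at this
    rw [mkron_apply, Matrix.one_apply_ne h]
    rcases this with h1 | h1
    · rw [Matrix.one_apply_ne h1, zero_mul]
    · rw [Matrix.one_apply_ne h1, mul_zero]

lemma mkron_smul_left (c : R) (P : Matrix m m R) (M : Matrix n n R) :
    mkron q (c • P) M = c • mkron q P M := by
  ext x y; simp [mkron_apply, mul_assoc]

lemma mkron_smul_right (c : R) (P : Matrix m m R) (M : Matrix n n R) :
    mkron q P (c • M) = c • mkron q P M := by
  ext x y; simp [mkron_apply]; ring

lemma mkron_add_left (P P' : Matrix m m R) (M : Matrix n n R) :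
    mkron q (P + P') M = mkron q P M + mkron q P' M := by
  ext x y; simp [mkron_apply, add_mul]

lemma mkron_sub_left (P P' : Matrix m m R) (M : Matrix n n R) :
    mkron q (P - P') M = mkron q P M - mkron q P' M := by
  ext x y; simp [mkron_apply, sub_mul]

lemma mkron_neg_left (P : Matrix m m R) (M : Matrix n n R) :
    mkron q (-P) M = -mkron q P M := by
  ext x y; simp [mkron_apply]

lemma mkron_zero_right (P : Matrix m m R) :
    mkron q P (0 : Matrix n n R) = 0 := by
  ext x y; simp [mkron_apply]

lemma mkron_sum_right {α : Type*} (s : Finset α) (P : Matrix m m R) (M : α → Matrix n n R) :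
    mkron q P (∑ k ∈ s, M k) = ∑ k ∈ s, mkron q P (M k) := by
  ext x y; simp [mkron_apply, Matrix.sum_apply, Finset.mul_sum]

lemma mkron_pow_left (P : Matrix m m R) (k : ℕ) :
    (mkron q P 1) ^ k = mkron q (P ^ k) 1 := by
  induction k with
  | zero => simp [mkron_one]
  | succ k ih => rw [pow_succ, ih, mkron_mul, one_mul, ← pow_succ]

lemma mkron_pow_right (M : Matrix n n R) (k : ℕ) :
    (mkron q (1 : Matrix m m R) M) ^ k = mkron q 1 (M ^ k) := by
  induction k with
  | zero => simp [mkron_one]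
  | succ k ih => rw [pow_succ, ih, mkron_mul, one_mul, ← pow_succ]

end KronAux

section ExpAux

variable {ι : Type*} [Fintype ι] [DecidableEq ι]

lemma matexp_nilpotent (A : Matrix ι ι ℝ) (m : ℕ) (h : A ^ m = 0) :
    NormedSpace.exp A = ∑ k ∈ Finset.range m, ((k.factorial : ℝ))⁻¹ • A ^ k := by
  letI : SeminormedRing (Matrix ι ι ℝ) := Matrix.linftyOpSemiNormedRing
  letI : NormedRing (Matrix ι ι ℝ) := Matrix.linftyOpNormedRing
  letI : NormedAlgebra ℝ (Matrix ι ι ℝ) := Matrix.linftyOpNormedAlgebra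
  rw [NormedSpace.exp_eq_tsum (𝕂 := ℝ)]
  refine tsum_eq_sum ?_
  intro k hk
  rw [Finset.mem_range, not_lt] at hk
  rw [← Nat.add_sub_cancel' hk, pow_add, h, zero_mul, smul_zero]

lemma matexp_cube (A : Matrix ι ι ℝ) (h3 : A * A * A = -A) (τ : ℝ) :
    NormedSpace.exp (τ • A) =
      1 + Real.sin τ • A + (1 - Real.cos τ) • (A * A) := by
  letI : SeminormedRing (Matrix ι ι ℝ) := Matrix.linftyOpSemiNormedRing
  letI : NormedRing (Matrix ι ι ℝ) := Matrix.linftyOpNormedRing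
  letI : NormedAlgebra ℝ (Matrix ι ι ℝ) := Matrix.linftyOpNormedAlgebra
  have hodd : ∀ k : ℕ, A ^ (2 * k + 1) = ((-1 : ℝ) ^ k) • A := by
    intro k
    induction k with
    | zero => simp
    | succ k ih =>
      have : 2 * (k + 1) + 1 = (2 * k + 1) + 2 := by ring
      rw [this, pow_add, ih, pow_two, smul_mul_assoc, ← mul_assoc, h3]
      rw [pow_succ]
      simp [mul_smul]
  have heven : ∀ k : ℕ, A ^ (2 * (k + 1)) = ((-1 : ℝ) ^ k) • (A * A) := by
    intro k
    have : 2 * (k + 1) = (2 * k + 1) + 1 := by ring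
    rw [this, pow_succ, hodd k, smul_mul_assoc]
  have hf : ∀ n : ℕ, ((n.factorial : ℝ))⁻¹ • (τ • A) ^ n
      = (((n.factorial : ℝ))⁻¹ * τ ^ n) • A ^ n := by
    intro n; rw [smul_pow, smul_smul]
  have hs : HasSum (fun n : ℕ => ((n.factorial : ℝ))⁻¹ • (τ • A) ^ n)
      (NormedSpace.exp (τ • A)) := NormedSpace.exp_series_hasSum_exp' (τ • A)
  have hsin := (Real.hasSum_sin τ).smul_const (a := A)
  have hodd_sum : HasSum (fun k : ℕ => ((((2 * k + 1).factorial : ℝ))⁻¹ • (τ • A) ^ (2 * k + 1)))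
      (Real.sin τ • A) := by
    have he : (fun k : ℕ => ((((2 * k + 1).factorial : ℝ))⁻¹ • (τ • A) ^ (2 * k + 1)))
        = fun k : ℕ => ((-1 : ℝ) ^ k * τ ^ (2 * k + 1) / ((2 * k + 1).factorial : ℝ)) • A := by
      funext k
      rw [hf, hodd k, smul_smul]
      congr 1
      field_simp
    rw [he]; exact hsin
  have hcos := Real.hasSum_cos τ
  have hcos' : HasSum (fun k : ℕ => ((-1 : ℝ) ^ (k + 1) * τ ^ (2 * (k + 1)) / ((2 * (k + 1)).factorial : ℝ)))
      (Real.cos τ - 1) := by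
    refine (hasSum_nat_add_iff
      (f := fun n : ℕ => ((-1 : ℝ) ^ n * τ ^ (2 * n) / ((2 * n).factorial : ℝ))) 1).2 ?_
    simpa using hcos
  have heven_tail : HasSum (fun k : ℕ => (((2 * (k + 1)).factorial : ℝ))⁻¹ • (τ • A) ^ (2 * (k + 1)))
      ((1 - Real.cos τ) • (A * A)) := by
    have := (hcos'.neg).smul_const (a := A * A)
    have he : (fun k : ℕ => (((2 * (k + 1)).factorial : ℝ))⁻¹ • (τ • A) ^ (2 * (k + 1)))
        = fun k : ℕ => (-((-1 : ℝ) ^ (k + 1) * τ ^ (2 * (k + 1)) / ((2 * (k + 1)).factorial : ℝ))) • (A * A) := by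
      funext k
      rw [hf, heven k, smul_smul]
      congr 1
      rw [pow_succ]
      field_simp
    rw [he]
    convert this using 2 <;> ring
  have heven_sum : HasSum (fun k : ℕ => (((2 * k).factorial : ℝ))⁻¹ • (τ • A) ^ (2 * k))
      (1 + (1 - Real.cos τ) • (A * A)) := by
    have h0 : (fun k : ℕ => (((2 * k).factorial : ℝ))⁻¹ • (τ • A) ^ (2 * k)) 0 = 1 := by
      simp
    have := (hasSum_nat_add_iff (f := fun k : ℕ => (((2 * k).factorial : ℝ))⁻¹ • (τ • A) ^ (2 * k)) 1).1
      heven_tail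
    simpa [h0, add_comm] using this
  have htot := HasSum.even_add_odd (f := fun n : ℕ => ((n.factorial : ℝ))⁻¹ • (τ • A) ^ n)
    heven_sum hodd_sum
  rw [hs.unique htot]
  abel

end ExpAux

section Pieces

variable {R : Type*} [CommRing R]

def myJ3 (R : Type*) [CommRing R] : Matrix (Fin 3) (Fin 3) R := !![0,0,0;0,0,-1;0,1,0]

lemma myJ3_cube : myJ3 R * myJ3 R * myJ3 R = -(myJ3 R) := by
  ext a b
  fin_cases a <;> fin_cases b <;>
    simp [myJ3, Matrix.mul_apply, Fin.sum_univ_three, Matrix.vecHead, Matrix.vecTail]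

def myN0 (R : Type*) [CommRing R] (p : ℕ) : Matrix (Fin (p+1)) (Fin (p+1)) R :=
  Matrix.of fun i j => if (i : ℕ) + 1 = (j : ℕ) then 1 else 0

lemma myN0_pow (p k : ℕ) : (myN0 R p) ^ k =
    Matrix.of fun (i j : Fin (p+1)) => if (i : ℕ) + k = (j : ℕ) then 1 else 0 := by
  induction k with
  | zero =>
    ext i j
    simp [Matrix.one_apply, Fin.ext_iff]
  | succ k ih =>
    rw [pow_succ, ih]
    ext i j
    rw [Matrix.mul_apply]
    by_cases hj : (i : ℕ) + (k + 1) = (j : ℕ)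
    · have hlt : (i : ℕ) + k < p + 1 := by omega
      rw [Finset.sum_eq_single (⟨(i : ℕ) + k, hlt⟩ : Fin (p+1))]
      · simp [myN0, hj]; omega
      · intro l _ hl
        have : ¬ ((i : ℕ) + k = (l : ℕ)) := by
          intro h; exact hl (Fin.ext (by simpa using h.symm))
        simp [myN0, this]
      · intro h; exact absurd (Finset.mem_univ _) h
    · rw [Finset.sum_eq_zero]
      · simp [hj]
      · intro l _
        by_cases h1 : (i : ℕ) + k = (l : ℕ)
        · have : ¬ ((l : ℕ) + 1 = (j : ℕ)) := by omega
          simp [myN0, this]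
        · simp [myN0, h1]
    
lemma myN0_pow_top (p : ℕ) : (myN0 R p) ^ (p + 1) = 0 := by
  rw [myN0_pow]
  ext i j
  have : ¬ ((i : ℕ) + (p + 1) = (j : ℕ)) := by omega
  simp [this]

end Pieces

section Main

open NormedSpace in
noncomputable section

def myQ (p : ℕ) : Fin (3*p+3) ≃ Fin 3 × Fin (p+1) :=
  (finCongr (by ring : 3*p+3 = 3*(p+1))).trans finProdFinEquiv.symm

def myB (p : ℕ) (r ξ : ℝ) : Matrix (Fin (3*p+3)) (Fin (3*p+3)) ℝ :=
  r • 1 + ξ • mkron (myQ p) (myJ3 ℝ) 1 + mkron (myQ p) 1 (myN0 ℝ p)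

def myW (p : ℕ) (a : Fin (p+1) → ℝ) : Fin (p+1) → ℝ :=
  fun j => a j * (j : ℕ).factorial * (-1)^(j : ℕ)

def myAu (p : ℕ) (c d : ℝ) (a : Fin (p+1) → ℝ) :
    Matrix (Fin (3*p+3)) (Fin (3*p+3)) ℝ :=
  Matrix.of fun x y =>
      (if (myQ p x).1 = 0 ∧ (myQ p x).2 = 0 ∧ (myQ p y).1 = 0 then myW p a (myQ p y).2 else 0)
    + (if (myQ p x).1 = 1 ∧ (myQ p x).2 = 0 ∧ (myQ p y).1 = 1 then c * myW p a (myQ p y).2 else 0)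
    + (if (myQ p x).1 = 1 ∧ (myQ p x).2 = 0 ∧ (myQ p y).1 = 2 then d * myW p a (myQ p y).2 else 0)

end

lemma myB_spectrum (p : ℕ) (r ξ : ℝ) (hr : 0 < r) :
    ∀ μ ∈ spectrum ℂ ((myB p r ξ).map (Complex.ofReal)), 0 < μ.re := by
  intro μ hμ
  by_contra hre
  push_neg at hre
  rw [spectrum.mem_iff] at hμ
  apply hμ
  have hone : ∀ {κ : Type} [Fintype κ] [DecidableEq κ] (x y : κ),
      (((1 : Matrix κ κ ℝ) x y : ℝ) : ℂ) = (1 : Matrix κ κ ℂ) x y := by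
    intro κ _ _ x y
    rw [Matrix.one_apply, Matrix.one_apply, apply_ite Complex.ofReal]
    simp
  have hJ : ∀ a b, ((myJ3 ℝ a b : ℝ) : ℂ) = myJ3 ℂ a b := by
    intro a b
    fin_cases a <;> fin_cases b <;> simp [myJ3, Matrix.vecHead, Matrix.vecTail]
  have hN : ∀ i j, ((myN0 ℝ p i j : ℝ) : ℂ) = myN0 ℂ p i j := by
    intro i j
    rw [show myN0 ℝ p i j = if (i : ℕ) + 1 = (j : ℕ) then 1 else 0 from rfl,
      show myN0 ℂ p i j = if (i : ℕ) + 1 = (j : ℕ) then 1 else 0 from rfl,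
      apply_ite Complex.ofReal]
    simp
  have hmap : (myB p r ξ).map (Complex.ofReal)
      = (r : ℂ) • 1 + (ξ : ℂ) • mkron (myQ p) (myJ3 ℂ) 1 + mkron (myQ p) 1 (myN0 ℂ p) := by
    ext x y
    simp only [myB, Matrix.map_apply, Matrix.add_apply, Matrix.smul_apply, mkron_apply,
      smul_eq_mul, Complex.ofReal_add, Complex.ofReal_mul]
    rw [hone, hJ, hN, hone, hone]
  rw [hmap]
  set Q : Matrix (Fin 3) (Fin 3) ℂ := (μ - r) • 1 - (ξ : ℂ) • myJ3 ℂ with hQdef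
  have hexpr : (algebraMap ℂ (Matrix (Fin (3*p+3)) (Fin (3*p+3)) ℂ)) μ
      - ((r : ℂ) • 1 + (ξ : ℂ) • mkron (myQ p) (myJ3 ℂ) 1 + mkron (myQ p) 1 (myN0 ℂ p))
      = mkron (myQ p) Q 1 + -(mkron (myQ p) 1 (myN0 ℂ p)) := by
    rw [Algebra.algebraMap_eq_smul_one, hQdef, mkron_sub_left, mkron_smul_left, mkron_smul_left,
      mkron_one]
    module
  rw [hexpr]
  have hdet : Q.det = (μ - r) * ((μ - r)^2 + (ξ : ℂ)^2) := by
    rw [Matrix.det_fin_three]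
    simp [hQdef, myJ3, Matrix.smul_apply, Matrix.one_apply, Matrix.sub_apply,
      Matrix.vecHead, Matrix.vecTail]
    ring
  have hμr : μ - (r : ℂ) ≠ 0 := by
    intro h
    have := congrArg Complex.re h
    simp at this
    linarith
  have hfact : (μ - r)^2 + (ξ : ℂ)^2 = ((μ - r) + ξ * Complex.I) * ((μ - r) - ξ * Complex.I) := by
    have : ((μ - r) + ξ * Complex.I) * ((μ - r) - ξ * Complex.I)
        = (μ - r)^2 - (ξ : ℂ)^2 * Complex.I^2 := by ring
    rw [this, Complex.I_sq]
    ring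
  have hf1 : (μ - r) + ξ * Complex.I ≠ 0 := by
    intro h
    have := congrArg Complex.re h
    simp at this
    linarith
  have hf2 : (μ - r) - ξ * Complex.I ≠ 0 := by
    intro h
    have := congrArg Complex.re h
    simp at this
    linarith
  have hdet_unit : IsUnit Q.det := by
    rw [hdet, hfact]
    exact (isUnit_iff_ne_zero).2 (mul_ne_zero hμr (mul_ne_zero hf1 hf2))
  have hKunit : IsUnit (mkron (myQ p) Q 1) := by
    refine isUnit_iff_exists.2 ⟨mkron (myQ p) Q⁻¹ 1, ?_, ?_⟩
    · rw [mkron_mul, Matrix.mul_nonsing_inv _ hdet_unit, one_mul, mkron_one]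
    · rw [mkron_mul, Matrix.nonsing_inv_mul _ hdet_unit, one_mul, mkron_one]
  have hnil : IsNilpotent (-(mkron (myQ p) (1 : Matrix (Fin 3) (Fin 3) ℂ) (myN0 ℂ p))) := by
    refine IsNilpotent.neg ⟨p+1, ?_⟩
    rw [mkron_pow_right, myN0_pow_top, mkron_zero_right]
  have hcomm : Commute (-(mkron (myQ p) (1 : Matrix (Fin 3) (Fin 3) ℂ) (myN0 ℂ p)))
      (mkron (myQ p) Q 1) := by
    refine Commute.neg_left ?_
    show _ * _ = _ * _
    rw [mkron_mul, mkron_mul, one_mul, mul_one, one_mul, mul_one]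
  exact hnil.isUnit_add_left_of_commute hKunit hcomm

lemma myB_exp (p : ℕ) (r ξ : ℝ) (s : ℝ) :
    NormedSpace.exp (-(s • myB p r ξ)) =
      Real.exp ((-s)*r) • mkron (myQ p)
        ((1 : Matrix (Fin 3) (Fin 3) ℝ) + Real.sin ((-s)*ξ) • myJ3 ℝ
          + (1 - Real.cos ((-s)*ξ)) • (myJ3 ℝ * myJ3 ℝ))
        (∑ k ∈ Finset.range (p+1), (((k.factorial : ℝ))⁻¹ * (-s)^k) • (myN0 ℝ p)^k) := by
  letI : SeminormedRing (Matrix (Fin (3*p+3)) (Fin (3*p+3)) ℝ) := Matrix.linftyOpSemiNormedRing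
  letI : NormedRing (Matrix (Fin (3*p+3)) (Fin (3*p+3)) ℝ) := Matrix.linftyOpNormedRing
  letI : NormedAlgebra ℝ (Matrix (Fin (3*p+3)) (Fin (3*p+3)) ℝ) := Matrix.linftyOpNormedAlgebra
  set D := mkron (myQ p) (myJ3 ℝ) (1 : Matrix (Fin (p+1)) (Fin (p+1)) ℝ) with hD
  set Nn := mkron (myQ p) (1 : Matrix (Fin 3) (Fin 3) ℝ) (myN0 ℝ p) with hNn
  have hDN : Commute D Nn := by
    show _ * _ = _ * _
    rw [hD, hNn, mkron_mul, mkron_mul, one_mul, mul_one, one_mul, mul_one]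
  have hsplit : -(s • myB p r ξ) = ((-s)*r) • 1 + (((-s)*ξ) • D + (-s) • Nn) := by
    rw [myB, hD, hNn]
    module
  rw [hsplit]
  rw [Matrix.exp_add_of_commute _ _ (Commute.add_right
    (((Commute.one_left D).smul_left _).smul_right _)
    (((Commute.one_left Nn).smul_left _).smul_right _))]
  rw [Matrix.exp_add_of_commute _ _ ((hDN.smul_left _).smul_right _)]
  have hE1 : NormedSpace.exp (((-s)*r) • (1 : Matrix (Fin (3*p+3)) (Fin (3*p+3)) ℝ))
      = Real.exp ((-s)*r) • 1 := by
    rw [← Algebra.algebraMap_eq_smul_one]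
    erw [← NormedSpace.algebraMap_exp_comm]
    rw [Algebra.algebraMap_eq_smul_one, Real.exp_eq_exp_ℝ]
  have hD3 : D * D * D = -D := by
    rw [hD, mkron_mul, mkron_mul, one_mul, one_mul, myJ3_cube, mkron_neg_left]
  have hE2 : NormedSpace.exp (((-s)*ξ) • D)
      = mkron (myQ p) ((1 : Matrix (Fin 3) (Fin 3) ℝ) + Real.sin ((-s)*ξ) • myJ3 ℝ
          + (1 - Real.cos ((-s)*ξ)) • (myJ3 ℝ * myJ3 ℝ)) 1 := by
    rw [matexp_cube D hD3]
    rw [mkron_add_left, mkron_add_left, mkron_smul_left, mkron_smul_left, mkron_one,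
      hD, mkron_mul, one_mul]
  have hnilp : ((-s) • Nn) ^ (p+1) = 0 := by
    rw [smul_pow, hNn, mkron_pow_right, myN0_pow_top, mkron_zero_right, smul_zero]
  have hE3 : NormedSpace.exp ((-s) • Nn)
      = mkron (myQ p) 1 (∑ k ∈ Finset.range (p+1), (((k.factorial : ℝ))⁻¹ * (-s)^k) • (myN0 ℝ p)^k) := by
    rw [matexp_nilpotent _ (p+1) hnilp, mkron_sum_right]
    refine Finset.sum_congr rfl fun k _ => ?_
    rw [smul_pow, hNn, mkron_pow_right, mkron_smul_right, smul_smul]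
  rw [hE1, hE2, hE3, mkron_mul, mul_one, one_mul, smul_mul_assoc, one_mul]

lemma myB_trace (p : ℕ) (r ξ c d : ℝ) (a : Fin (p+1) → ℝ) (s : ℝ) :
    Matrix.trace ((myAu p c d a)ᵀ * NormedSpace.exp (-(s • myB p r ξ))) =
      (∑ k : Fin (p + 1), a k * s ^ (k : ℕ)) *
        (1 + c * Real.cos (ξ * s) + d * Real.sin (ξ * s)) * Real.exp (-r * s) := by
  rw [myB_exp]
  set G : Matrix (Fin 3) (Fin 3) ℝ := (1 : Matrix (Fin 3) (Fin 3) ℝ) + Real.sin ((-s)*ξ) • myJ3 ℝ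
      + (1 - Real.cos ((-s)*ξ)) • (myJ3 ℝ * myJ3 ℝ) with hG
  set M : Matrix (Fin (p+1)) (Fin (p+1)) ℝ :=
      ∑ k ∈ Finset.range (p+1), (((k.factorial : ℝ))⁻¹ * (-s)^k) • (myN0 ℝ p)^k with hM
  have htr : Matrix.trace ((myAu p c d a)ᵀ * (Real.exp ((-s)*r) • mkron (myQ p) G M))
      = ∑ y, ∑ x, myAu p c d a x y * (Real.exp ((-s)*r) * (G (myQ p x).1 (myQ p y).1 * M (myQ p x).2 (myQ p y).2)) := by
    rw [Matrix.trace]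
    simp [Matrix.diag, Matrix.mul_apply, Matrix.transpose_apply, mkron_apply]
  rw [htr]
  have hsum2 : ∀ F : Fin (3*p+3) → Fin (3*p+3) → ℝ,
      (∑ y, ∑ x, F x y)
        = ∑ w : Fin 3 × Fin (p+1), ∑ v : Fin 3 × Fin (p+1), F ((myQ p).symm v) ((myQ p).symm w) := by
    intro F
    rw [← Equiv.sum_comp (myQ p).symm (fun y => ∑ x, F x y)]
    exact Finset.sum_congr rfl fun w _ =>
      (Equiv.sum_comp (myQ p).symm (fun x => F x ((myQ p).symm w))).symm
  rw [hsum2]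
  simp only [myAu, Matrix.of_apply, Equiv.apply_symm_apply, Fintype.sum_prod_type,
    Fin.sum_univ_three]
  simp only [add_mul, ite_mul, zero_mul, Finset.sum_add_distrib, Finset.sum_ite_eq',
    Finset.mem_univ, if_true]
  simp only [(by decide : (0:Fin 3) ≠ 1), (by decide : (0:Fin 3) ≠ 2), (by decide : (1:Fin 3) ≠ 0),
    (by decide : (1:Fin 3) ≠ 2), (by decide : (2:Fin 3) ≠ 0), (by decide : (2:Fin 3) ≠ 1),
    true_and, and_true, false_and, and_false, if_false, ite_false, Finset.sum_const_zero,
    add_zero, zero_add, Finset.sum_ite_eq', Finset.mem_univ, if_true]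
  have hG00 : G 0 0 = 1 := by
    simp [hG, myJ3, Matrix.one_apply, Matrix.mul_apply, Fin.sum_univ_three,
      Matrix.vecHead, Matrix.vecTail]
  have hG11 : G 1 1 = Real.cos (-s*ξ) := by
    simp [hG, myJ3, Matrix.one_apply, Matrix.mul_apply, Fin.sum_univ_three,
      Matrix.vecHead, Matrix.vecTail]
  have hG12 : G 1 2 = -Real.sin (-s*ξ) := by
    simp [hG, myJ3, Matrix.one_apply, Matrix.mul_apply, Fin.sum_univ_three,
      Matrix.vecHead, Matrix.vecTail]
  have hM0 : ∀ j : Fin (p+1), M 0 j = (((j : ℕ).factorial : ℝ))⁻¹ * (-s)^(j : ℕ) := by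
    intro j
    rw [hM]
    simp only [Matrix.sum_apply, Matrix.smul_apply, myN0_pow, Matrix.of_apply, Fin.val_zero,
      zero_add, smul_eq_mul, mul_ite, mul_one, mul_zero]
    rw [Finset.sum_ite_eq' (Finset.range (p+1)) ((j : ℕ))
      (fun k => ((k.factorial : ℝ))⁻¹ * (-s)^k)]
    simp [j.is_lt]
  rw [hG00, hG11, hG12]
  simp only [hM0]
  rw [← Finset.sum_add_distrib, ← Finset.sum_add_distrib, Finset.sum_mul, Finset.sum_mul]
  refine Finset.sum_congr rfl fun j _ => ?_
  have hneg : ((-s):ℝ)^(j:ℕ) = (-1)^(j:ℕ) * s^(j:ℕ) := by rw [← neg_one_mul, mul_pow]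
  have hfac : (((j:ℕ).factorial : ℝ)) ≠ 0 := Nat.cast_ne_zero.2 (Nat.factorial_ne_zero _)
  have h1 : ((-1:ℝ))^(j:ℕ) * ((-1:ℝ))^(j:ℕ) = 1 := by rw [← mul_pow]; norm_num
  have hw : myW p a j * ((((j:ℕ).factorial : ℝ))⁻¹ * (-s)^(j:ℕ)) = a j * s^(j:ℕ) := by
    calc myW p a j * ((((j:ℕ).factorial : ℝ))⁻¹ * (-s)^(j:ℕ))
        = (a j * s^(j:ℕ)) * ((((j:ℕ).factorial:ℝ)) * (((j:ℕ).factorial:ℝ))⁻¹)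
            * ((-1:ℝ)^(j:ℕ) * (-1:ℝ)^(j:ℕ)) := by rw [myW, hneg]; ring
      _ = a j * s^(j:ℕ) := by rw [mul_inv_cancel₀ hfac, h1, mul_one, mul_one]
  have e1 : (-s*ξ : ℝ) = -(ξ*s) := by ring
  have e2 : (-s*r : ℝ) = -(r*s) := by ring
  have e3 : (-r*s : ℝ) = -(r*s) := by ring
  rw [e1, e2, e3, Real.cos_neg, Real.sin_neg]
  linear_combination (Real.exp (-(r*s)) * (1 + c * Real.cos (ξ*s) + d * Real.sin (ξ*s))) * hw

end Main

/-- a function `u(s) = P(s) (1 + c cos(ξ s) + d sin(ξ s)) e^{-rs}`, with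
`P(s) = ∑_{k=0}^p a_k s^k`, `r > 0` and `ξ, c, d ≥ 0`, admits a matrix-exponential
representation `u(s) = ⟨A_u | exp (-s B_u)⟩` with `(3p+3) × (3p+3)` real matrices, where
every complex eigenvalue of `B_u` has strictly positive real part. -/
theorem stmt1 (p : ℕ) (r ξ c d : ℝ) (hr : 0 < r) (hξ : 0 ≤ ξ) (hc : 0 ≤ c) (hd : 0 ≤ d)
    (a : Fin (p + 1) → ℝ) :
    ∃ (Au Bu : Matrix (Fin (3 * p + 3)) (Fin (3 * p + 3)) ℝ),
      (∀ μ ∈ spectrum ℂ (Bu.map (Complex.ofReal)), 0 < μ.re) ∧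
      ∀ s : ℝ, 0 ≤ s →
        (∑ k : Fin (p + 1), a k * s ^ (k : ℕ)) *
            (1 + c * Real.cos (ξ * s) + d * Real.sin (ξ * s)) * Real.exp (-r * s) =
          Matrix.trace (Auᵀ * NormedSpace.exp (-(s • Bu))) := by
  exact ⟨myAu p c d a, myB p r ξ, myB_spectrum p r ξ hr,
    fun s _ => (myB_trace p r ξ c d a s).symm⟩
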